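/- Let G be a connected weighted graph, s,t vertices, and ε > 0. Let H₀ be a subgraph of G with d_{H₀}(s,t) > d_G(s,t) + ε·W(s,t), and let H₁ be H₀ together with all edges of π(s,t). Let x be a vertex with d_{H₀}(u,x) ≤ (ε/4)·W(s,t) for some vertex u on π(s,t). Then: (1) d_{H₁}(s,x) ≤ d_G(s,x) + (ε/2)·W(s,t) and d_{H₁}(t,x) ≤ d_G(t,x) + (ε/2)·W(s,t); and (2) d_{H₀}(s,x) − d_{H₁}(s,x) ≥ (ε/4)·W(s,t) or d_{H₀}(t,x) − d_{H₁}(t,x) ≥ (ε/4)·W(s,t). -/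

import Mathlib

open scoped ENNReal Classical

/-- The total weight of a walk: the sum of the weights of its edges. -/
noncomputable def walkWeight {V : Type} (G : SimpleGraph V) (w : Sym2 V → ℝ≥0∞)
    {s t : V} (p : G.Walk s t) : ℝ≥0∞ :=
  (p.edges.map w).sum

/-- Shortest-path distance in the weighted graph `(G, w)`, equal to `⊤` if there is no path. -/
noncomputable def gdist {V : Type} (G : SimpleGraph V) (w : Sym2 V → ℝ≥0∞)
    (s t : V) : ℝ≥0∞ :=
  ⨅ p : G.Walk s t, walkWeight G w p

/-- The maximum edge weight along a walk (0 for the trivial walk). -/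
noncomputable def maxEdge {V : Type} (G : SimpleGraph V) (w : Sym2 V → ℝ≥0∞)
    {s t : V} (p : G.Walk s t) : ℝ≥0∞ :=
  (p.edges.map w).foldr max 0

namespace Helper

variable {V : Type} {G H : SimpleGraph V} {w : Sym2 V → ℝ≥0∞}

lemma gdist_le {s t : V} (p : G.Walk s t) : gdist G w s t ≤ walkWeight G w p :=
  iInf_le _ p

lemma walkWeight_append {s u t : V} (p : G.Walk s u) (q : G.Walk u t) :
    walkWeight G w (p.append q) = walkWeight G w p + walkWeight G w q := by
  simp [walkWeight, SimpleGraph.Walk.edges_append]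

lemma walkWeight_transfer {s t : V} (p : G.Walk s t) (h : ∀ e ∈ p.edges, e ∈ H.edgeSet) :
    walkWeight H w (p.transfer H h) = walkWeight G w p := by
  simp [walkWeight, SimpleGraph.Walk.edges_transfer]

lemma gdist_triangle (s u t : V) : gdist G w s t ≤ gdist G w s u + gdist G w u t := by
  unfold gdist
  rw [ENNReal.iInf_add]
  refine le_iInf fun p => ?_
  rw [ENNReal.add_iInf]
  refine le_iInf fun q => ?_
  exact (iInf_le _ (p.append q)).trans (le_of_eq (walkWeight_append p q))

lemma gdist_comm_le (s t : V) : gdist G w s t ≤ gdist G w t s := by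
  refine le_iInf fun q => (iInf_le _ q.reverse).trans (le_of_eq ?_)
  simp [walkWeight, SimpleGraph.Walk.edges_reverse, List.map_reverse, List.sum_reverse]

lemma gdist_comm (s t : V) : gdist G w s t = gdist G w t s :=
  le_antisymm (gdist_comm_le s t) (gdist_comm_le t s)

lemma gdist_mono (h : G ≤ H) (s t : V) : gdist H w s t ≤ gdist G w s t := by
  refine le_iInf fun p => ?_
  refine (iInf_le _ (p.transfer H fun e he => ?_)).trans (le_of_eq (walkWeight_transfer p _))
  exact SimpleGraph.edgeSet_mono h (p.edges_subset_edgeSet he)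

lemma walkWeight_ne_top {s t : V} (p : G.Walk s t) (h : ∀ e ∈ p.edges, w e ≠ ⊤) :
    walkWeight G w p ≠ ⊤ := by
  have : ∀ l : List ℝ≥0∞, (∀ a ∈ l, a ≠ ⊤) → l.sum ≠ ⊤ := by
    intro l
    induction l with
    | nil => simp
    | cons a l ih =>
      intro h'
      simp only [List.sum_cons, ne_eq, ENNReal.add_eq_top, not_or]
      exact ⟨h' a List.mem_cons_self, ih fun b hb => h' b (List.mem_cons_of_mem a hb)⟩
  refine this _ fun a ha => ?_
  rw [List.mem_map] at ha
  obtain ⟨e, he, rfl⟩ := ha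
  exact h e he

lemma foldr_max_ne_top {l : List ℝ≥0∞} (h : ∀ a ∈ l, a ≠ ⊤) : l.foldr max 0 ≠ ⊤ := by
  induction l with
  | nil => simp
  | cons a l ih =>
    simp only [List.foldr_cons, ne_eq, max_eq_top, not_or]
    exact ⟨h a List.mem_cons_self, ih fun b hb => h b (List.mem_cons_of_mem a hb)⟩

end Helper

/-- `π` assigns to each ordered vertex pair a shortest path: a walk whose total
weight equals the shortest-path distance. -/
def IsShortestPathScheme {V : Type} (G : SimpleGraph V) (w : Sym2 V → ℝ≥0∞)
    (π : (s t : V) → G.Walk s t) : Prop :=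
  ∀ s t : V, walkWeight G w (π s t) = gdist G w s t

/-- The edge weights are positive and finite on all edges of `G`. -/
def PosWeights {V : Type} (G : SimpleGraph V) (w : Sym2 V → ℝ≥0∞) : Prop :=
  ∀ e ∈ G.edgeSet, 0 < w e ∧ w e ≠ ⊤

/-- Set-off/improvement lemma for `+εW(·,·)` spanner completion.
`H₀` is a subgraph still violating the `+ε·W(s,t)` bound for `(s,t)`, `H₁` is `H₀` plus all
edges of `π(s,t)`, and `x` is a vertex with `d_{H₀}(u,x) ≤ (ε/4)·W(s,t)` for some vertex `u`
on `π(s,t)`. Then the pairs `(s,x)` and `(t,x)` are set off in `H₁`, and at least one of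
them improves by at least `(ε/4)·W(s,t)`. -/
theorem improvements_eps_W
    (V : Type) [Fintype V] (G : SimpleGraph V) (w : Sym2 V → ℝ≥0∞)
    (hconn : G.Connected) (hw : PosWeights G w)
    (π : (s t : V) → G.Walk s t) (hπ : IsShortestPathScheme G w π)
    (s t : V) (ε : ℝ) (hε : 0 < ε)
    (H₀ H₁ : SimpleGraph V) (hH₀ : H₀ ≤ G)
    (hviol : gdist H₀ w s t >
      gdist G w s t + ENNReal.ofReal ε * maxEdge G w (π s t))
    (hH₁ : H₁ = H₀ ⊔ SimpleGraph.fromEdgeSet {e | e ∈ (π s t).edges})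
    (x u : V) (hu : u ∈ (π s t).support)
    (hx : gdist H₀ w u x ≤ ENNReal.ofReal (ε / 4) * maxEdge G w (π s t)) :
    (gdist H₁ w s x ≤ gdist G w s x + ENNReal.ofReal (ε / 2) * maxEdge G w (π s t) ∧
      gdist H₁ w t x ≤ gdist G w t x + ENNReal.ofReal (ε / 2) * maxEdge G w (π s t)) ∧
    (gdist H₀ w s x - gdist H₁ w s x ≥ ENNReal.ofReal (ε / 4) * maxEdge G w (π s t) ∨
      gdist H₀ w t x - gdist H₁ w t x ≥ ENNReal.ofReal (ε / 4) * maxEdge G w (π s t)) := by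
  classical
  set P := π s t with hPdef
  set W := maxEdge G w P with hWdef
  set q := ENNReal.ofReal (ε / 4) * W with hqdef
  have hedgefin : ∀ e ∈ P.edges, w e ≠ ⊤ := fun e he => (hw e (P.edges_subset_edgeSet he)).2
  have hWfin : W ≠ ⊤ := by
    refine Helper.foldr_max_ne_top ?_
    intro a ha
    rw [List.mem_map] at ha
    obtain ⟨e, he, rfl⟩ := ha
    exact hedgefin e he
  have hqfin : q ≠ ⊤ := ENNReal.mul_ne_top ENNReal.ofReal_ne_top hWfin
  have hGfin : ∀ a b : V, gdist G w a b ≠ ⊤ := by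
    intro a b
    obtain ⟨p⟩ := hconn.preconnected a b
    exact ne_top_of_le_ne_top
      (Helper.walkWeight_ne_top p fun e he => (hw e (p.edges_subset_edgeSet he)).2)
      (Helper.gdist_le p)
  have hH01 : H₀ ≤ H₁ := hH₁ ▸ le_sup_left
  set p1 := P.takeUntil u hu with hp1def
  set p2 := P.dropUntil u hu with hp2def
  have hsum : walkWeight G w p1 + walkWeight G w p2 = gdist G w s t := by
    rw [← Helper.walkWeight_append, SimpleGraph.Walk.take_spec]
    exact hπ s t
  have hp1fin : walkWeight G w p1 ≠ ⊤ :=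
    Helper.walkWeight_ne_top _ fun e he => hedgefin e (P.edges_takeUntil_subset hu he)
  have hp2fin : walkWeight G w p2 ≠ ⊤ :=
    Helper.walkWeight_ne_top _ fun e he => hedgefin e (P.edges_dropUntil_subset hu he)
  have h1 : gdist G w s u ≤ walkWeight G w p1 := Helper.gdist_le p1
  have h2 : gdist G w u t ≤ walkWeight G w p2 := Helper.gdist_le p2
  have he1 : walkWeight G w p1 = gdist G w s u := by
    by_contra hne
    have hlt : gdist G w s u < walkWeight G w p1 := h1.lt_of_ne (Ne.symm hne)
    have : gdist G w s t < gdist G w s t := by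
      calc gdist G w s t ≤ gdist G w s u + gdist G w u t := Helper.gdist_triangle s u t
        _ ≤ gdist G w s u + walkWeight G w p2 := add_le_add_right h2 _
        _ < walkWeight G w p1 + walkWeight G w p2 := ENNReal.add_lt_add_right hp2fin hlt
        _ = gdist G w s t := hsum
    exact lt_irrefl _ this
  have he2 : walkWeight G w p2 = gdist G w u t := by
    by_contra hne
    have hlt : gdist G w u t < walkWeight G w p2 := h2.lt_of_ne (Ne.symm hne)
    have : gdist G w s t < gdist G w s t := by
      calc gdist G w s t ≤ gdist G w s u + gdist G w u t := Helper.gdist_triangle s u t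
        _ ≤ walkWeight G w p1 + gdist G w u t := add_le_add_left h1 _
        _ < walkWeight G w p1 + walkWeight G w p2 := ENNReal.add_lt_add_left hp1fin hlt
        _ = gdist G w s t := hsum
    exact lt_irrefl _ this
  have hPedges : ∀ e ∈ P.edges, e ∈ H₁.edgeSet := by
    intro e he
    rw [hH₁, SimpleGraph.edgeSet_sup]
    right
    rw [SimpleGraph.edgeSet_fromEdgeSet]
    exact ⟨he, G.not_isDiag_of_mem_edgeSet (P.edges_subset_edgeSet he)⟩
  have hd1 : gdist H₁ w s u ≤ walkWeight G w p1 :=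
    (Helper.gdist_le (p1.transfer H₁ fun e he =>
      hPedges e (P.edges_takeUntil_subset hu he))).trans
      (le_of_eq (Helper.walkWeight_transfer _ _))
  have hd2 : gdist H₁ w u t ≤ walkWeight G w p2 :=
    (Helper.gdist_le (p2.transfer H₁ fun e he =>
      hPedges e (P.edges_dropUntil_subset hu he))).trans
      (le_of_eq (Helper.walkWeight_transfer _ _))
  have hux1 : gdist H₁ w u x ≤ q := (Helper.gdist_mono hH01 u x).trans hx
  have hsx : gdist H₁ w s x ≤ gdist G w s u + q :=
    (Helper.gdist_triangle s u x).trans (add_le_add (hd1.trans he1.le) hux1)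
  have htx : gdist H₁ w t x ≤ gdist G w u t + q := by
    refine (Helper.gdist_triangle t u x).trans (add_le_add ?_ hux1)
    rw [Helper.gdist_comm t u]
    exact hd2.trans he2.le
  have hxu : gdist G w x u ≤ q :=
    calc gdist G w x u ≤ gdist H₀ w x u := Helper.gdist_mono hH₀ x u
      _ = gdist H₀ w u x := Helper.gdist_comm x u
      _ ≤ q := hx
  have hux : gdist G w u x ≤ q := (Helper.gdist_comm u x).le.trans hxu
  have hqq : q + q = ENNReal.ofReal (ε / 2) * W := by
    rw [hqdef, ← add_mul, ← ENNReal.ofReal_add (by positivity) (by positivity),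
      show ε / 4 + ε / 4 = ε / 2 by ring]
  have h4q : q + q + q + q = ENNReal.ofReal ε * W := by
    rw [hqdef, ← add_mul, ← add_mul, ← add_mul,
      ← ENNReal.ofReal_add (by positivity) (by positivity),
      ← ENNReal.ofReal_add (by positivity) (by positivity),
      ← ENNReal.ofReal_add (by positivity) (by positivity),
      show ε / 4 + ε / 4 + ε / 4 + ε / 4 = ε by ring]
  have part1s : gdist H₁ w s x ≤ gdist G w s x + ENNReal.ofReal (ε / 2) * W := by
    calc gdist H₁ w s x ≤ gdist G w s u + q := hsx
      _ ≤ (gdist G w s x + gdist G w x u) + q :=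
        add_le_add_left (Helper.gdist_triangle s x u) q
      _ ≤ (gdist G w s x + q) + q := add_le_add_left (add_le_add_right hxu _) q
      _ = gdist G w s x + (q + q) := add_assoc _ _ _
      _ = _ := by rw [hqq]
  have part1t : gdist H₁ w t x ≤ gdist G w t x + ENNReal.ofReal (ε / 2) * W := by
    calc gdist H₁ w t x ≤ gdist G w u t + q := htx
      _ ≤ (gdist G w u x + gdist G w x t) + q :=
        add_le_add_left (Helper.gdist_triangle u x t) q
      _ ≤ (q + gdist G w t x) + q := by
        rw [Helper.gdist_comm x t]
        exact add_le_add_left (add_le_add_left hux _) q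
      _ = gdist G w t x + (q + q) := by ring
      _ = _ := by rw [hqq]
  refine ⟨⟨part1s, part1t⟩, ?_⟩
  by_contra hcon
  push_neg at hcon
  obtain ⟨hns, hnt⟩ := hcon
  have hfs : gdist H₁ w s x ≠ ⊤ :=
    ne_top_of_le_ne_top (ENNReal.add_ne_top.2 ⟨hGfin s u, hqfin⟩) hsx
  have hft : gdist H₁ w t x ≠ ⊤ :=
    ne_top_of_le_ne_top (ENNReal.add_ne_top.2 ⟨hGfin u t, hqfin⟩) htx
  have hst : gdist H₀ w s x < q + gdist H₁ w s x := by
    have hcanc : gdist H₀ w s x - gdist H₁ w s x + gdist H₁ w s x = gdist H₀ w s x :=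
      tsub_add_cancel_of_le (Helper.gdist_mono hH01 s x)
    rw [← hcanc]
    exact ENNReal.add_lt_add_right hfs hns
  have htt : gdist H₀ w t x < q + gdist H₁ w t x := by
    have hcanc : gdist H₀ w t x - gdist H₁ w t x + gdist H₁ w t x = gdist H₀ w t x :=
      tsub_add_cancel_of_le (Helper.gdist_mono hH01 t x)
    rw [← hcanc]
    exact ENNReal.add_lt_add_right hft hnt
  have hfinal : gdist H₀ w s t < gdist G w s t + ENNReal.ofReal ε * W := by
    calc gdist H₀ w s t ≤ gdist H₀ w s x + gdist H₀ w x t := Helper.gdist_triangle s x t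
      _ = gdist H₀ w s x + gdist H₀ w t x := by rw [Helper.gdist_comm x t]
      _ < (q + gdist H₁ w s x) + (q + gdist H₁ w t x) := ENNReal.add_lt_add hst htt
      _ ≤ (q + (gdist G w s u + q)) + (q + (gdist G w u t + q)) :=
        add_le_add (add_le_add_right hsx q) (add_le_add_right htx q)
      _ = (gdist G w s u + gdist G w u t) + (q + q + q + q) := by ring
      _ = gdist G w s t + ENNReal.ofReal ε * W := by
        rw [← he1, ← he2, hsum, h4q]
  exact lt_irrefl _ (hfinal.trans hviol)
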